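/- Let S be a countable type with measurable singletons. Let A : Ω → S be a random variable, let (Y_a)_{a ∈ S} be a family of integrable random variables Y_a : Ω → ℝ (potential outcomes), and let Y : Ω → ℝ be integrable and satisfy consistency: Y(ω) = Y_{A(ω)}(ω) for all ω. Fix a ∈ S with P(A = a) > 0 and assume Y_a is independent of A. Then E[Y_a] = E[Y | A = a]. In particular, if S = {0,1} and the hypotheses hold for both a = 0 and a = 1, the total effect satisfies E[Y₁] − E[Y₀] = E[Y | A = 1] − E[Y | A = 0]. -/

import Mathlib

open MeasureTheory ProbabilityTheory

lemma aux_mean_ident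
    {Ω : Type*} [MeasurableSpace Ω] (P : Measure Ω) [IsProbabilityMeasure P]
    {S : Type*} [MeasurableSpace S] [MeasurableSingletonClass S]
    (A : Ω → S) (hA : Measurable A)
    (Ypo : S → Ω → ℝ) (hYpoMeas : ∀ a, Measurable (Ypo a))
    (hYpoInt : ∀ a, Integrable (Ypo a) P)
    (Y : Ω → ℝ) (hYint : Integrable Y P)
    (hcons : ∀ ω, Y ω = Ypo (A ω) ω)
    (a : S) (ha : 0 < P {ω | A ω = a})
    (hindep : IndepFun (Ypo a) A P) :
    ∫ ω, Ypo a ω ∂P = ∫ ω, Y ω ∂P[|{ω | A ω = a}] := by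
  set E : Set Ω := {ω | A ω = a} with hEdef
  have hE : MeasurableSet E := hA (measurableSet_singleton a)
  have hPE : P E ≠ 0 := ha.ne'
  have hPEtop : P E ≠ ⊤ := (measure_lt_top P E).ne
  set f : S → ℝ := ({a} : Set S).indicator (fun _ => (1:ℝ)) with hfdef
  have hf : Measurable f := measurable_const.indicator (measurableSet_singleton a)
  have hindep' : IndepFun (Ypo a) (f ∘ A) P := hindep.comp measurable_id hf
  have h1 : ∫ ω, Y ω ∂P[|E] = (P E).toReal⁻¹ • ∫ ω in E, Y ω ∂P := by
    rw [ProbabilityTheory.cond, integral_smul_measure, ENNReal.toReal_inv]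
  have h2 : ∫ ω in E, Y ω ∂P = ∫ ω in E, Ypo a ω ∂P := by
    refine setIntegral_congr_fun hE fun ω hω => ?_
    have : A ω = a := hω
    rw [hcons, this]
  have h3 : ∫ ω in E, Ypo a ω ∂P = ∫ ω, (Ypo a * (f ∘ A)) ω ∂P := by
    rw [← integral_indicator hE]
    congr 1
    ext ω
    by_cases h : ω ∈ E
    · simp [Set.indicator_of_mem h, hfdef, Function.comp,
        Set.indicator_of_mem (show A ω ∈ ({a} : Set S) from h)]
    · have h' : A ω ∉ ({a} : Set S) := h
      simp [Set.indicator_of_notMem h, hfdef, Function.comp, Set.indicator_of_notMem h']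
  have h4 : ∫ ω, (Ypo a * (f ∘ A)) ω ∂P = (∫ ω, Ypo a ω ∂P) * ∫ ω, (f ∘ A) ω ∂P :=
    hindep'.integral_mul_eq_mul_integral (hYpoMeas a).aestronglyMeasurable
      (hf.comp hA).aestronglyMeasurable
  have h5 : ∫ ω, (f ∘ A) ω ∂P = (P E).toReal := by
    have : (f ∘ A) = E.indicator (fun _ => (1:ℝ)) := by
      ext ω
      by_cases h : ω ∈ E
      · simp [Set.indicator_of_mem h, hfdef, Function.comp,
          Set.indicator_of_mem (show A ω ∈ ({a} : Set S) from h)]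
      · have h' : A ω ∉ ({a} : Set S) := h
        simp [Set.indicator_of_notMem h, hfdef, Function.comp, Set.indicator_of_notMem h']
    rw [this, integral_indicator_const _ hE]
    simp
    rfl
  rw [h1, h2, h3, h4, h5, smul_eq_mul]
  field_simp [ENNReal.toReal_eq_zero_iff, hPE, hPEtop]

/-- Under ignorability `Y_a ⟂ A` and consistency, `E[Y_a] = E[Y | A = a]`.
In particular, for a binary treatment the total effect `E[Y₁] − E[Y₀]` equals the
observational difference of conditional means `E[Y | A = 1] − E[Y | A = 0]`. -/
theorem ignorability_mean_identification
    {Ω : Type*} [MeasurableSpace Ω] (P : Measure Ω) [IsProbabilityMeasure P]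
    {S : Type*} [Countable S] [MeasurableSpace S] [MeasurableSingletonClass S]
    (A : Ω → S) (hA : Measurable A)
    (Ypo : S → Ω → ℝ) (hYpoMeas : ∀ a, Measurable (Ypo a))
    (hYpoInt : ∀ a, Integrable (Ypo a) P)
    (Y : Ω → ℝ) (hYint : Integrable Y P)
    (hcons : ∀ ω, Y ω = Ypo (A ω) ω)
    (a : S) (ha : 0 < P {ω | A ω = a})
    (hindep : IndepFun (Ypo a) A P) :
    (∫ ω, Ypo a ω ∂P = ∫ ω, Y ω ∂P[|{ω | A ω = a}])
    ∧ (∀ (A' : Ω → Fin 2), Measurable A' →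
        ∀ (Ypo' : Fin 2 → Ω → ℝ), (∀ b, Measurable (Ypo' b)) →
          (∀ b, Integrable (Ypo' b) P) →
        ∀ (Y' : Ω → ℝ), Integrable Y' P →
          (∀ ω, Y' ω = Ypo' (A' ω) ω) →
          (∀ b : Fin 2, 0 < P {ω | A' ω = b}) →
          (∀ b : Fin 2, IndepFun (Ypo' b) A' P) →
          (∫ ω, Ypo' 1 ω ∂P) - (∫ ω, Ypo' 0 ω ∂P)
            = (∫ ω, Y' ω ∂P[|{ω | A' ω = 1}]) - (∫ ω, Y' ω ∂P[|{ω | A' ω = 0}])) := by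

  refine ⟨aux_mean_ident P A hA Ypo hYpoMeas hYpoInt Y hYint hcons a ha hindep, ?_⟩
  intro A' hA' Ypo' hYm' hYi' Y' hY'int hcons' hpos' hind'
  rw [← aux_mean_ident P A' hA' Ypo' hYm' hYi' Y' hY'int hcons' 1 (hpos' 1) (hind' 1),
      ← aux_mean_ident P A' hA' Ypo' hYm' hYi' Y' hY'int hcons' 0 (hpos' 0) (hind' 0)]
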